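/- For every D ⊆ E admitting a d-flow and every e ∈ E: the first two defining cases of ψ_e are mutually exclusive (so ψ_e is well defined); ψ_e(D) admits a d-flow with A(ψ_e(D)) = A(D); ψ_e(D) contains either both or neither of e and rev e; and ψ_e(D) ∖ {e, rev e} = D ∖ {e, rev e}. -/

import Mathlib

open Finset

section Defs

variable {V : Type*}

/-- Reversal of a directed edge. -/
def drev (e : V × V) : V × V := (e.2, e.1)

/-- `K` is a subgraph of the (symmetric) edge set `E`: it contains either both or
neither of `e` and `drev e` for every `e ∈ E`. -/
def IsSubgraph [DecidableEq V] (E K : Finset (V × V)) : Prop :=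
  K ⊆ E ∧ ∀ e ∈ E, (e ∈ K ↔ drev e ∈ K)

/-- `L` is an orientation of the (symmetric) edge set `E`: it contains exactly one of
`e` and `drev e` for every `e ∈ E`. -/
def IsOrientation [DecidableEq V] (E L : Finset (V × V)) : Prop :=
  L ⊆ E ∧ ∀ e ∈ E, (e ∈ L ↔ drev e ∉ L)

variable [Fintype V] [DecidableEq V]

/-- `f` is a `d`-flow on the directed subgraph `D` of the graph with edge set `E`. -/
def IsFlow (E D : Finset (V × V)) (d : V → ℤ) (f : V × V → ℝ) : Prop :=
  (∀ e ∈ E, 0 ≤ f e ∧ f e ≤ 1) ∧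
  (∀ e, e ∉ D → f e = 0) ∧
  ∀ u : V,
    ((Finset.univ.filter (fun v : V => (u, v) ∈ E)).sum fun v => f (u, v)) -
      ((Finset.univ.filter (fun v : V => (v, u) ∈ E)).sum fun v => f (v, u)) = (d u : ℝ)

/-- A `d`-flow exists on `D`. -/
def AdmitsFlow (E D : Finset (V × V)) (d : V → ℤ) : Prop :=
  ∃ f : V × V → ℝ, IsFlow E D d f

/-- The `w`-cost of a flow `f`. -/
def flowCost (E : Finset (V × V)) (w : V × V → ℝ) (f : V × V → ℝ) : ℝ :=
  ∑ e ∈ E, w e * f e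

/-- `f` is a min-cost `d`-flow on `D`. -/
def IsMinCostFlow (E D : Finset (V × V)) (d : V → ℤ) (w : V × V → ℝ)
    (f : V × V → ℝ) : Prop :=
  IsFlow E D d f ∧ ∀ g : V × V → ℝ, IsFlow E D d g → flowCost E w f ≤ flowCost E w g

/-- The `{0,1}`-valued function determined by a set of edges. -/
def ind (S : Finset (V × V)) : V × V → ℝ := fun e => if e ∈ S then 1 else 0

/-- `A` assigns to every flow-admitting `D ⊆ E` the (edge set of the) unique,
`{0,1}`-valued min-cost `d`-flow on `D`. -/
def GoodA (E : Finset (V × V)) (d : V → ℤ) (w : V × V → ℝ)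
    (A : Finset (V × V) → Finset (V × V)) : Prop :=
  ∀ D : Finset (V × V), D ⊆ E → AdmitsFlow E D d →
    IsMinCostFlow E D d w (ind (A D)) ∧
    ∀ f : V × V → ℝ, IsMinCostFlow E D d w f → f = ind (A D)

/-- `A(D) = A(D')`: both `D` and `D'` admit a `d`-flow and their unique min-cost
`d`-flows coincide.  (If one of them admits no `d`-flow this is false.) -/
def AEq (E : Finset (V × V)) (d : V → ℤ) (A : Finset (V × V) → Finset (V × V))
    (D D' : Finset (V × V)) : Prop :=
  AdmitsFlow E D d ∧ AdmitsFlow E D' d ∧ A D = A D'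

/-- `D ⊕ e := (D ∪ {e}) \ {drev e}`. -/
def oplus (D : Finset (V × V)) (e : V × V) : Finset (V × V) := insert e D \ {drev e}

/-- `D + e := D ∪ {e, drev e}`. -/
def padd (D : Finset (V × V)) (e : V × V) : Finset (V × V) := D ∪ {e, drev e}

/-- `D − e := D \ {e, drev e}`. -/
def psub (D : Finset (V × V)) (e : V × V) : Finset (V × V) := D \ {e, drev e}

/-- The representative of `{e, drev e}` lying in the reference orientation `E'`. -/
def chi (E' : Finset (V × V)) (e : V × V) : V × V := if e ∈ E' then e else drev e

/-- The map `φ_e`. -/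
noncomputable def phiE (E : Finset (V × V)) (d : V → ℤ)
    (A : Finset (V × V) → Finset (V × V)) (E' : Finset (V × V))
    (e : V × V) (D : Finset (V × V)) : Finset (V × V) := by
  classical
  exact
    if ¬ AEq E d A D (oplus D e) then oplus D (drev e)
    else if ¬ AEq E d A D (oplus D (drev e)) then oplus D e
    else if e ∈ D then oplus D (chi E' e) else oplus D (drev (chi E' e))

/-- The map `ψ_e`. -/
noncomputable def psiE (E : Finset (V × V)) (d : V → ℤ)
    (A : Finset (V × V) → Finset (V × V)) (E' : Finset (V × V))
    (e : V × V) (D : Finset (V × V)) : Finset (V × V) := by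
  classical
  exact
    if ¬ AEq E d A D (padd D e) then psub D e
    else if ¬ AEq E d A D (psub D e) then padd D e
    else if chi E' e ∈ D then padd D e else psub D e

end Defs

section Aux
set_option linter.unusedSectionVars false

variable {V : Type*} [Fintype V] [DecidableEq V]

lemma drev_drev' (e : V × V) : drev (drev e) = e := rfl

lemma ind_inj {S T : Finset (V × V)} (h : ind S = ind T) : S = T := by
  ext x
  have hx := congrFun h x
  simp only [ind] at hx
  by_cases h1 : x ∈ S <;> by_cases h2 : x ∈ T <;> simp_all

lemma flow_mono {E D D' : Finset (V × V)} {d : V → ℤ} {f : V × V → ℝ}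
    (hDD' : D ⊆ D') (hf : IsFlow E D d f) : IsFlow E D' d f :=
  ⟨hf.1, fun x hx => hf.2.1 x (fun hxD => hx (hDD' hxD)), hf.2.2⟩

/-- Modify a function by adding `t` on both `e` and `drev e`. -/
def perturb (e : V × V) (t : ℝ) (h : V × V → ℝ) : V × V → ℝ :=
  fun x => h x + (if x = e then t else 0) + (if x = drev e then t else 0)

lemma sum_pair_out (E : Finset (V × V)) {e : V × V} (he : e ∈ E) (t : ℝ) (u : V) :
    (∑ v ∈ Finset.univ.filter (fun v : V => (u, v) ∈ E), (if (u, v) = e then t else 0))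
      = if u = e.1 then t else 0 := by
  obtain ⟨e1, e2⟩ := e
  by_cases hu : u = e1
  · subst hu
    simp only [Prod.mk.injEq, true_and]
    rw [Finset.sum_ite_eq' _ e2 (fun _ => t)]
    simp_all
  · rw [if_neg hu]
    apply Finset.sum_eq_zero
    intro v _
    simp [Prod.ext_iff, hu]

lemma sum_pair_in (E : Finset (V × V)) {e : V × V} (he : e ∈ E) (t : ℝ) (u : V) :
    (∑ v ∈ Finset.univ.filter (fun v : V => (v, u) ∈ E), (if (v, u) = e then t else 0))
      = if u = e.2 then t else 0 := by
  obtain ⟨e1, e2⟩ := e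
  by_cases hu : u = e2
  · subst hu
    simp only [Prod.mk.injEq, and_true]
    rw [Finset.sum_ite_eq' _ e1 (fun _ => t)]
    simp_all
  · rw [if_neg hu]
    apply Finset.sum_eq_zero
    intro v _
    simp [Prod.ext_iff, hu]

lemma perturb_div (E : Finset (V × V)) {e : V × V} (he : e ∈ E) (he' : drev e ∈ E)
    (t : ℝ) (h : V × V → ℝ) (u : V) :
    ((Finset.univ.filter (fun v : V => (u, v) ∈ E)).sum fun v => perturb e t h (u, v)) -
      ((Finset.univ.filter (fun v : V => (v, u) ∈ E)).sum fun v => perturb e t h (v, u)) =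
    ((Finset.univ.filter (fun v : V => (u, v) ∈ E)).sum fun v => h (u, v)) -
      ((Finset.univ.filter (fun v : V => (v, u) ∈ E)).sum fun v => h (v, u)) := by
  simp only [perturb, Finset.sum_add_distrib]
  rw [sum_pair_out E he t u, sum_pair_out E he' t u,
      sum_pair_in E he t u, sum_pair_in E he' t u]
  show _ = _
  unfold drev
  abel

lemma perturb_cost (E : Finset (V × V)) (w : V × V → ℝ) {e : V × V} (he : e ∈ E)
    (he' : drev e ∈ E) (t : ℝ) (h : V × V → ℝ) :
    flowCost E w (perturb e t h) = flowCost E w h + t * w e + t * w (drev e) := by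
  simp only [flowCost, perturb, mul_add, Finset.sum_add_distrib, mul_ite, mul_zero]
  have h1 : (∑ x ∈ E, if x = e then w x * t else 0) = w e * t := by
    rw [Finset.sum_ite_eq' _ e (fun x => w x * t), if_pos he]
  have h2 : (∑ x ∈ E, if x = drev e then w x * t else 0) = w (drev e) * t := by
    rw [Finset.sum_ite_eq' _ (drev e) (fun x => w x * t), if_pos he']
  rw [h1, h2]; ring

/-- The `{0,1}`-valued function `ind S` only takes values 0 and 1. -/
lemma ind_vals (S : Finset (V × V)) (x : V × V) : ind S x = 0 ∨ ind S x = 1 := by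
  unfold ind; by_cases h : x ∈ S <;> simp [h]

lemma AEq_symm {E : Finset (V × V)} {d : V → ℤ} {A : Finset (V × V) → Finset (V × V)}
    {D D' : Finset (V × V)} (h : AEq E d A D D') : AEq E d A D' D :=
  ⟨h.2.1, h.1, h.2.2.symm⟩

/-- A minimum-cost flow never uses both `e` and `drev e` with value 1. -/
lemma min_not_both {E D' : Finset (V × V)} {d : V → ℤ} {w : V × V → ℝ}
    (hw : ∀ x ∈ E, 0 < w x) {e : V × V} (he : e ∈ E) (he' : drev e ∈ E)
    (hne : e ≠ drev e) {h : V × V → ℝ} (hmin : IsMinCostFlow E D' d w h)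
    (h1 : h e = 1) (h2 : h (drev e) = 1) : False := by
  have hflow := hmin.1
  set h' := perturb e (-1) h with hh'
  have h'e : h' e = 0 := by simp [hh', perturb, h1, hne]
  have h'e' : h' (drev e) = 0 := by simp [hh', perturb, h2, Ne.symm hne]
  have h'x : ∀ x, x ≠ e → x ≠ drev e → h' x = h x := by
    intro x hx1 hx2; simp [hh', perturb, hx1, hx2]
  have hflow' : IsFlow E D' d h' := by
    refine ⟨?_, ?_, ?_⟩
    · intro x hx
      rcases eq_or_ne x e with rfl | hx1
      · rw [h'e]; norm_num
      rcases eq_or_ne x (drev e) with rfl | hx2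
      · rw [h'e']; norm_num
      · rw [h'x x hx1 hx2]; exact hflow.1 x hx
    · intro x hx
      rcases eq_or_ne x e with rfl | hx1
      · exact h'e
      rcases eq_or_ne x (drev e) with rfl | hx2
      · exact h'e'
      · rw [h'x x hx1 hx2]; exact hflow.2.1 x hx
    · intro u
      rw [show ((Finset.univ.filter (fun v : V => (u, v) ∈ E)).sum fun v => h' (u, v)) -
          ((Finset.univ.filter (fun v : V => (v, u) ∈ E)).sum fun v => h' (v, u)) =
          ((Finset.univ.filter (fun v : V => (u, v) ∈ E)).sum fun v => h (u, v)) -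
          ((Finset.univ.filter (fun v : V => (v, u) ∈ E)).sum fun v => h (v, u)) from
        perturb_div E he he' (-1) h u]
      exact hflow.2.2 u
  have hcost : flowCost E w h' = flowCost E w h + (-1) * w e + (-1) * w (drev e) :=
    perturb_cost E w he he' (-1) h
  have := hmin.2 h' hflow'
  have hwe := hw e he
  have hwe' := hw (drev e) he'
  linarith

/-- Average of two flows is a flow on the union of the supports. -/
lemma avg_flow {E D1 D2 : Finset (V × V)} {d : V → ℤ} {f g : V × V → ℝ}
    (hf : IsFlow E D1 d f) (hg : IsFlow E D2 d g) :
    IsFlow E (D1 ∪ D2) d (fun x => (f x + g x) / 2) := by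
  refine ⟨?_, ?_, ?_⟩
  · intro x hx
    have h1 := hf.1 x hx
    have h2 := hg.1 x hx
    constructor <;> [linarith; linarith]
  · intro x hx
    rw [Finset.mem_union] at hx
    push_neg at hx
    show (f x + g x) / 2 = 0
    rw [hf.2.1 x hx.1, hg.2.1 x hx.2]
    norm_num
  · intro u
    have h1 := hf.2.2 u
    have h2 := hg.2.2 u
    simp only [add_div, Finset.sum_add_distrib, ← Finset.sum_div]
    linarith

lemma avg_cost (E : Finset (V × V)) (w : V × V → ℝ) (f g : V × V → ℝ) :
    flowCost E w (fun x => (f x + g x) / 2) = (flowCost E w f + flowCost E w g) / 2 := by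
  simp only [flowCost]
  rw [← Finset.sum_add_distrib, Finset.sum_div]
  congr 1; ext x; ring

/-- Key dichotomy: `A D` agrees with `A (D + e)` or with `A (D - e)`. -/
lemma key_dichotomy {E : Finset (V × V)} (hE_symm : ∀ e, e ∈ E ↔ drev e ∈ E)
    (hE_ne : ∀ e ∈ E, e.1 ≠ e.2) {d : V → ℤ} {w : V × V → ℝ}
    (hw : ∀ x ∈ E, 0 < w x) {A : Finset (V × V) → Finset (V × V)} (hA : GoodA E d w A)
    {D : Finset (V × V)} (hD : D ⊆ E) (hDf : AdmitsFlow E D d)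
    {e : V × V} (he : e ∈ E) :
    AEq E d A D (padd D e) ∨ AEq E d A D (psub D e) := by
  classical
  have he' : drev e ∈ E := (hE_symm e).1 he
  have hne : e ≠ drev e := fun h => hE_ne e he (congrArg Prod.fst h)
  have hpaddE : padd D e ⊆ E := by
    intro x hx
    rcases Finset.mem_union.1 hx with h | h
    · exact hD h
    · simp only [Finset.mem_insert, Finset.mem_singleton] at h
      rcases h with rfl | rfl <;> assumption
  have hpsubD : psub D e ⊆ D := Finset.sdiff_subset
  have hDpadd : D ⊆ padd D e := Finset.subset_union_left
  obtain ⟨hfmin, hfuniq⟩ := hA D hD hDf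
  set f := ind (A D) with hfdef
  have hfflow : IsFlow E D d f := hfmin.1
  have hpaddf : AdmitsFlow E (padd D e) d := ⟨f, flow_mono hDpadd hfflow⟩
  obtain ⟨hgmin, hguniq⟩ := hA (padd D e) hpaddE hpaddf
  set g := ind (A (padd D e)) with hgdef
  have hgflow : IsFlow E (padd D e) d g := hgmin.1
  by_cases hAeq : A D = A (padd D e)
  · exact Or.inl ⟨hDf, hpaddf, hAeq⟩
  right
  have hgle : flowCost E w g ≤ flowCost E w f := hgmin.2 f (flow_mono hDpadd hfflow)
  have hglt : flowCost E w g < flowCost E w f := by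
    rcases lt_or_eq_of_le hgle with h | h
    · exact h
    exfalso
    apply hAeq
    have hfm : IsMinCostFlow E (padd D e) d w f :=
      ⟨flow_mono hDpadd hfflow, fun k hk => h ▸ hgmin.2 k hk⟩
    exact ind_inj (hguniq f hfm)
  -- g uses e or drev e
  have hGsupport : ∀ x, x ∉ D → x ≠ e → x ≠ drev e → g x = 0 := by
    intro x hx h1 h2
    apply hgflow.2.1
    intro hmem
    rcases Finset.mem_union.1 hmem with h | h
    · exact hx h
    · simp only [Finset.mem_insert, Finset.mem_singleton] at h
      rcases h with rfl | rfl
      · exact h1 rfl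
      · exact h2 rfl
  have hG : g e = 1 ∨ g (drev e) = 1 := by
    by_contra hcon
    push_neg at hcon
    have hge : g e = 0 := (ind_vals _ e).resolve_right hcon.1
    have hge' : g (drev e) = 0 := (ind_vals _ (drev e)).resolve_right hcon.2
    have hgD : IsFlow E D d g := by
      refine ⟨hgflow.1, ?_, hgflow.2.2⟩
      intro x hx
      rcases eq_or_ne x e with rfl | h1
      · exact hge
      rcases eq_or_ne x (drev e) with rfl | h2
      · exact hge'
      · exact hGsupport x hx h1 h2
    exact absurd (hfmin.2 g hgD) (not_le.2 hglt)
  -- f does not use e nor drev e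
  have hclaim : ∀ a : V × V, (a = e ∨ a = drev e) → f a = 1 → False := by
    intro a ha hfa
    have hpair : padd D a = padd D e ∧ drev a ∈ ({e, drev e} : Finset (V × V)) ∧
        a ∈ E ∧ drev a ∈ E := by
      rcases ha with rfl | rfl
      · exact ⟨rfl, by simp, he, he'⟩
      · refine ⟨?_, by simp [drev_drev'], he', by rw [drev_drev']; exact he⟩
        unfold padd
        rw [drev_drev', Finset.pair_comm]
    have haE : a ∈ E := hpair.2.2.1
    have haE' : drev a ∈ E := hpair.2.2.2
    have hane : a ≠ drev a := fun h => hE_ne a haE (congrArg Prod.fst h)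
    have haD : a ∈ D := by
      by_contra hx
      rw [hfflow.2.1 a hx] at hfa
      norm_num at hfa
    have hfa' : f (drev a) = 0 := by
      rcases ind_vals (A D) (drev a) with h | h
      · exact h
      · exact absurd (min_not_both hw haE haE' hane hfmin hfa h) (fun x => x)
    have hG' : g a = 1 ∨ g (drev a) = 1 := by
      rcases ha with rfl | rfl
      · exact hG
      · rw [drev_drev']; exact hG.symm
    rcases hG' with hga | hga
    · -- g also uses a: g is then a flow on D, contradiction
      have hga' : g (drev a) = 0 := by
        rcases ind_vals (A (padd D e)) (drev a) with h | h
        · exact h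
        · exact absurd (min_not_both hw haE haE' hane hgmin hga h) (fun x => x)
      have hgD : IsFlow E D d g := by
        refine ⟨hgflow.1, ?_, hgflow.2.2⟩
        intro x hx
        rcases eq_or_ne x a with rfl | h1
        · exact absurd haD hx
        rcases eq_or_ne x (drev a) with rfl | h2
        · exact hga'
        · rcases ha with rfl | rfl
          · exact hGsupport x hx h1 h2
          · exact hGsupport x hx (by rwa [drev_drev'] at h2) h1
      exact absurd (hfmin.2 g hgD) (not_le.2 hglt)
    · -- g uses drev a: average then cancel the opposite pair
      have hga' : g a = 0 := by
        rcases ind_vals (A (padd D e)) a with h | h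
        · exact h
        · exact absurd (min_not_both hw haE haE' hane hgmin h hga) (fun x => x)
      set m := fun x => (f x + g x) / 2 with hm
      have hmflow : IsFlow E (padd D e) d m := by
        have := avg_flow hfflow hgflow
        rwa [Finset.union_eq_right.2 hDpadd] at this
      have hma : m a = 1/2 := by simp [hm, hfa, hga']
      have hma' : m (drev a) = 1/2 := by simp [hm, hfa', hga]
      set m' := perturb a (-(1/2)) m with hm'
      have hm'a : m' a = 0 := by
        simp [hm', perturb, hma, hane]
      have hm'a' : m' (drev a) = 0 := by
        simp [hm', perturb, hma', Ne.symm hane]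
      have hm'x : ∀ x, x ≠ a → x ≠ drev a → m' x = m x := by
        intro x h1 h2; simp [hm', perturb, h1, h2]
      have hm'flow : IsFlow E D d m' := by
        refine ⟨?_, ?_, ?_⟩
        · intro x hx
          rcases eq_or_ne x a with rfl | h1
          · rw [hm'a]; norm_num
          rcases eq_or_ne x (drev a) with rfl | h2
          · rw [hm'a']; norm_num
          · rw [hm'x x h1 h2]; exact hmflow.1 x hx
        · intro x hx
          rcases eq_or_ne x a with rfl | h1
          · exact hm'a
          rcases eq_or_ne x (drev a) with rfl | h2
          · exact hm'a'
          · rw [hm'x x h1 h2, hm]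
            have hfx : f x = 0 := hfflow.2.1 x hx
            have hgx : g x = 0 := by
              rcases ha with rfl | rfl
              · exact hGsupport x hx h1 h2
              · exact hGsupport x hx (by rwa [drev_drev'] at h2) h1
            simp [hfx, hgx]
        · intro u
          rw [show ((Finset.univ.filter (fun v : V => (u, v) ∈ E)).sum fun v => m' (u, v)) -
              ((Finset.univ.filter (fun v : V => (v, u) ∈ E)).sum fun v => m' (v, u)) =
              ((Finset.univ.filter (fun v : V => (u, v) ∈ E)).sum fun v => m (u, v)) -
              ((Finset.univ.filter (fun v : V => (v, u) ∈ E)).sum fun v => m (v, u)) from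
            perturb_div E haE haE' (-(1/2)) m u]
          exact hmflow.2.2 u
      have hcostm : flowCost E w m = (flowCost E w f + flowCost E w g) / 2 :=
        avg_cost E w f g
      have hcostm' : flowCost E w m' =
          flowCost E w m + (-(1/2)) * w a + (-(1/2)) * w (drev a) :=
        perturb_cost E w haE haE' (-(1/2)) m
      have hwa := hw a haE
      have hwa' := hw (drev a) haE'
      have := hfmin.2 m' hm'flow
      linarith
  have hfe : f e = 0 := by
    rcases ind_vals (A D) e with h | h
    · exact h
    · exact absurd (hclaim e (Or.inl rfl) h) (fun x => x)
  have hfe' : f (drev e) = 0 := by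
    rcases ind_vals (A D) (drev e) with h | h
    · exact h
    · exact absurd (hclaim (drev e) (Or.inr rfl) h) (fun x => x)
  -- f is a flow on psub D e
  have hfpsub : IsFlow E (psub D e) d f := by
    refine ⟨hfflow.1, ?_, hfflow.2.2⟩
    intro x hx
    rcases eq_or_ne x e with rfl | h1
    · exact hfe
    rcases eq_or_ne x (drev e) with rfl | h2
    · exact hfe'
    · apply hfflow.2.1
      intro hxd
      exact hx (by simp [psub, hxd, h1, h2])
  have hpsubAdm : AdmitsFlow E (psub D e) d := ⟨f, hfpsub⟩
  obtain ⟨hpmin, hpuniq⟩ := hA (psub D e) (hpsubD.trans hD) hpsubAdm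
  have hfm : IsMinCostFlow E (psub D e) d w f :=
    ⟨hfpsub, fun k hk => hfmin.2 k (flow_mono hpsubD hk)⟩
  exact ⟨hDf, hpsubAdm, ind_inj (hpuniq f hfm)⟩

end Aux

theorem psiE_well_defined
    {V : Type*} [Fintype V] [DecidableEq V]
    (E : Finset (V × V)) (hE_symm : ∀ e, e ∈ E ↔ drev e ∈ E)
    (hE_ne : ∀ e ∈ E, e.1 ≠ e.2)
    (d : V → ℤ) (hd : ∑ u : V, d u = 0)
    (w : V × V → ℝ) (hw : ∀ e ∈ E, 0 < w e)
    (A : Finset (V × V) → Finset (V × V)) (hA : GoodA E d w A)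
    (E' : Finset (V × V)) (hE' : IsOrientation E E')
    (D : Finset (V × V)) (hD : D ⊆ E) (hDf : AdmitsFlow E D d)
    (e : V × V) (he : e ∈ E) :
    ¬ (¬ AEq E d A D (padd D e) ∧ ¬ AEq E d A D (psub D e)) ∧
    AEq E d A (psiE E d A E' e D) D ∧
    (e ∈ psiE E d A E' e D ↔ drev e ∈ psiE E d A E' e D) ∧
    psub (psiE E d A E' e D) e = psub D e := by
  classical
  have hkey := key_dichotomy hE_symm hE_ne hw hA hD hDf he
  have hpsi : AEq E d A D (psiE E d A E' e D) ∧
      (psiE E d A E' e D = padd D e ∨ psiE E d A E' e D = psub D e) := by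
    unfold psiE
    by_cases h1 : AEq E d A D (padd D e)
    · by_cases h2 : AEq E d A D (psub D e)
      · by_cases h3 : chi E' e ∈ D
        · rw [if_neg (not_not.mpr h1), if_neg (not_not.mpr h2), if_pos h3]
          exact ⟨h1, Or.inl rfl⟩
        · rw [if_neg (not_not.mpr h1), if_neg (not_not.mpr h2), if_neg h3]
          exact ⟨h2, Or.inr rfl⟩
      · rw [if_neg (not_not.mpr h1), if_pos h2]
        exact ⟨h1, Or.inl rfl⟩
    · rw [if_pos h1]
      exact ⟨hkey.resolve_left h1, Or.inr rfl⟩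
  refine ⟨?_, AEq_symm hpsi.1, ?_, ?_⟩
  · rintro ⟨hp1, hp2⟩
    rcases hkey with h | h
    · exact hp1 h
    · exact hp2 h
  · rcases hpsi.2 with h | h <;> rw [h] <;> simp [padd, psub]
  · rcases hpsi.2 with h | h <;> rw [h]
    · show (D ∪ {e, drev e}) \ {e, drev e} = D \ {e, drev e}
      rw [Finset.union_sdiff_distrib, Finset.sdiff_self, Finset.union_empty]
    · exact Finset.sdiff_idem D {e, drev e}
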